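/- Uniqueness of the average treatment effect under randomization: let μ1 and μ2 be probability measures on Bool × ℝ × ℝ with coordinates s = (z, y1, y0), each satisfying: z is independent of (y1, y0), the functions y1 and y0 are integrable, and 0 < μi({z = true}) < 1. If the pushforwards of μ1 and μ2 under s ↦ (if z then y1 else y0, z) agree (same law of (Y*, Z)), then ∫ (y1 − y0) dμ1 = ∫ (y1 − y0) dμ2; i.e., under the randomization assumption the average treatment effect is identifiable from the law of the observed data. -/

import Mathlib

open MeasureTheory

lemma ate_key_true (μ : Measure (Bool × ℝ × ℝ)) [IsProbabilityMeasure μ]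
    (hind : ProbabilityTheory.IndepFun
      (fun s : Bool × ℝ × ℝ => s.1) (fun s : Bool × ℝ × ℝ => s.2) μ)
    (h1 : Integrable (fun s : Bool × ℝ × ℝ => s.2.1) μ) :
    (∫ s : Bool × ℝ × ℝ, (if s.1 then s.2.1 else 0) ∂μ) =
      (μ {s : Bool × ℝ × ℝ | s.1 = true}).toReal * ∫ s : Bool × ℝ × ℝ, s.2.1 ∂μ := by
  have hindfg : ProbabilityTheory.IndepFun
      (fun s : Bool × ℝ × ℝ => if s.1 then (1:ℝ) else 0)
      (fun s : Bool × ℝ × ℝ => s.2.1) μ :=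
    hind.comp (measurable_from_top (f := fun b : Bool => if b then (1:ℝ) else 0))
      measurable_fst
  have hfe : (fun s : Bool × ℝ × ℝ => (if s.1 then (1:ℝ) else 0) * s.2.1) =
      fun s => if s.1 then s.2.1 else 0 := by
    funext s; cases s.1 <;> simp
  have hf : Integrable (fun s : Bool × ℝ × ℝ => if s.1 then (1:ℝ) else 0) μ := by
    apply Integrable.mono' (integrable_const (1:ℝ))
    · exact (measurable_from_top (f := fun b : Bool => if b then (1:ℝ) else 0)).comp
        measurable_fst |>.aestronglyMeasurable
    · filter_upwards with s; cases s.1 <;> simp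
  have := hindfg.integral_mul_eq_mul_integral hf.aestronglyMeasurable h1.aestronglyMeasurable
  rw [show (fun s : Bool × ℝ × ℝ => if s.1 then (1:ℝ) else 0) * (fun s => s.2.1) = _ from hfe]
    at this
  rw [this]
  congr 1
  have : (fun s : Bool × ℝ × ℝ => if s.1 then (1:ℝ) else 0) =
      Set.indicator {s : Bool × ℝ × ℝ | s.1 = true} (fun _ => (1:ℝ)) := by
    funext s; by_cases h : s.1 = true <;> simp [Set.indicator, h]
  rw [this, integral_indicator_const]
  · simp [measureReal_def]
  · exact measurable_fst (MeasurableSet.singleton true)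

lemma ate_key_false (μ : Measure (Bool × ℝ × ℝ)) [IsProbabilityMeasure μ]
    (hind : ProbabilityTheory.IndepFun
      (fun s : Bool × ℝ × ℝ => s.1) (fun s : Bool × ℝ × ℝ => s.2) μ)
    (h0 : Integrable (fun s : Bool × ℝ × ℝ => s.2.2) μ) :
    (∫ s : Bool × ℝ × ℝ, (if s.1 then 0 else s.2.2) ∂μ) =
      (μ {s : Bool × ℝ × ℝ | s.1 = false}).toReal * ∫ s : Bool × ℝ × ℝ, s.2.2 ∂μ := by
  have hindfg : ProbabilityTheory.IndepFun
      (fun s : Bool × ℝ × ℝ => if s.1 then (0:ℝ) else 1)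
      (fun s : Bool × ℝ × ℝ => s.2.2) μ :=
    hind.comp (measurable_from_top (f := fun b : Bool => if b then (0:ℝ) else 1))
      measurable_snd
  have hfe : (fun s : Bool × ℝ × ℝ => (if s.1 then (0:ℝ) else 1) * s.2.2) =
      fun s => if s.1 then 0 else s.2.2 := by
    funext s; cases s.1 <;> simp
  have hf : Integrable (fun s : Bool × ℝ × ℝ => if s.1 then (0:ℝ) else 1) μ := by
    apply Integrable.mono' (integrable_const (1:ℝ))
    · exact (measurable_from_top (f := fun b : Bool => if b then (0:ℝ) else 1)).comp
        measurable_fst |>.aestronglyMeasurable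
    · filter_upwards with s; cases s.1 <;> simp
  have := hindfg.integral_mul_eq_mul_integral hf.aestronglyMeasurable h0.aestronglyMeasurable
  rw [show (fun s : Bool × ℝ × ℝ => if s.1 then (0:ℝ) else 1) * (fun s => s.2.2) = _ from hfe]
    at this
  rw [this]
  congr 1
  have : (fun s : Bool × ℝ × ℝ => if s.1 then (0:ℝ) else 1) =
      Set.indicator {s : Bool × ℝ × ℝ | s.1 = false} (fun _ => (1:ℝ)) := by
    funext s; cases h : s.1 <;> simp [Set.indicator, h]
  rw [this, integral_indicator_const]
  · simp [measureReal_def]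
  · exact measurable_fst (MeasurableSet.singleton false)

/-- uniqueness of ATE under randomization: if `μ₁, μ₂` are probability
measures on `Bool × ℝ × ℝ` each satisfying the randomization assumption (`Z` independent
of `(Y(1), Y(0))`), with integrable potential outcomes, `0 < P(Z = true) < 1`, and the
same law of `(Y*, Z)`, then they have the same average treatment effect. -/
theorem ate_unique_under_randomization
    (μ₁ μ₂ : Measure (Bool × ℝ × ℝ)) [IsProbabilityMeasure μ₁] [IsProbabilityMeasure μ₂]
    (hind₁ : ProbabilityTheory.IndepFun
      (fun s : Bool × ℝ × ℝ => s.1) (fun s : Bool × ℝ × ℝ => s.2) μ₁)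
    (hind₂ : ProbabilityTheory.IndepFun
      (fun s : Bool × ℝ × ℝ => s.1) (fun s : Bool × ℝ × ℝ => s.2) μ₂)
    (h₁₁ : Integrable (fun s : Bool × ℝ × ℝ => s.2.1) μ₁)
    (h₁₀ : Integrable (fun s : Bool × ℝ × ℝ => s.2.2) μ₁)
    (h₂₁ : Integrable (fun s : Bool × ℝ × ℝ => s.2.1) μ₂)
    (h₂₀ : Integrable (fun s : Bool × ℝ × ℝ => s.2.2) μ₂)
    (hz₁0 : 0 < μ₁ {s : Bool × ℝ × ℝ | s.1 = true})
    (hz₁1 : μ₁ {s : Bool × ℝ × ℝ | s.1 = true} < 1)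
    (hz₂0 : 0 < μ₂ {s : Bool × ℝ × ℝ | s.1 = true})
    (hz₂1 : μ₂ {s : Bool × ℝ × ℝ | s.1 = true} < 1)
    (hmap : Measure.map (fun s : Bool × ℝ × ℝ => ((if s.1 then s.2.1 else s.2.2), s.1)) μ₁ =
            Measure.map (fun s : Bool × ℝ × ℝ => ((if s.1 then s.2.1 else s.2.2), s.1)) μ₂) :
    (∫ s : Bool × ℝ × ℝ, (s.2.1 - s.2.2) ∂μ₁) =
      ∫ s : Bool × ℝ × ℝ, (s.2.1 - s.2.2) ∂μ₂ := by
  set T := fun s : Bool × ℝ × ℝ => ((if s.1 then s.2.1 else s.2.2), s.1) with hT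
  have hsetT : MeasurableSet {s : Bool × ℝ × ℝ | s.1 = true} :=
    measurable_fst (MeasurableSet.singleton true)
  have hTm : Measurable T := by
    refine Measurable.prod ?_ measurable_fst
    exact Measurable.ite hsetT (measurable_fst.comp measurable_snd)
      (measurable_snd.comp measurable_snd)
  -- functions on the observed space
  set φ := fun q : ℝ × Bool => if q.2 then q.1 else 0 with hφ
  set ψ := fun q : ℝ × Bool => if q.2 then 0 else q.1 with hψ
  have hφm : Measurable φ := by
    refine Measurable.ite ?_ measurable_fst measurable_const
    exact measurable_snd (MeasurableSet.singleton true)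
  have hψm : Measurable ψ := by
    refine Measurable.ite ?_ measurable_const measurable_fst
    exact measurable_snd (MeasurableSet.singleton true)
  -- equality of probabilities of z = true
  have hp : μ₁ {s : Bool × ℝ × ℝ | s.1 = true} = μ₂ {s : Bool × ℝ × ℝ | s.1 = true} := by
    have hs : MeasurableSet {q : ℝ × Bool | q.2 = true} :=
      measurable_snd (MeasurableSet.singleton true)
    have e1 := Measure.map_apply hTm hs (μ := μ₁)
    have e2 := Measure.map_apply hTm hs (μ := μ₂)
    have : T ⁻¹' {q : ℝ × Bool | q.2 = true} = {s : Bool × ℝ × ℝ | s.1 = true} := rfl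
    rw [this] at e1 e2
    rw [← e1, ← e2, hmap]
  -- pull back integrals of φ, ψ
  have hφint : ∀ (μ : Measure (Bool × ℝ × ℝ)),
      ∫ q, φ q ∂(Measure.map T μ) = ∫ s : Bool × ℝ × ℝ, (if s.1 then s.2.1 else 0) ∂μ := by
    intro μ
    rw [integral_map hTm.aemeasurable hφm.aestronglyMeasurable]
    congr 1; funext s; cases h : s.1 <;> simp [hφ, hT, h]
  have hψint : ∀ (μ : Measure (Bool × ℝ × ℝ)),
      ∫ q, ψ q ∂(Measure.map T μ) = ∫ s : Bool × ℝ × ℝ, (if s.1 then 0 else s.2.2) ∂μ := by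
    intro μ
    rw [integral_map hTm.aemeasurable hψm.aestronglyMeasurable]
    congr 1; funext s; cases h : s.1 <;> simp [hψ, hT, h]
  have hA : ∫ s : Bool × ℝ × ℝ, (if s.1 then s.2.1 else 0) ∂μ₁ =
      ∫ s : Bool × ℝ × ℝ, (if s.1 then s.2.1 else 0) ∂μ₂ := by
    rw [← hφint μ₁, ← hφint μ₂, hmap]
  have hB : ∫ s : Bool × ℝ × ℝ, (if s.1 then 0 else s.2.2) ∂μ₁ =
      ∫ s : Bool × ℝ × ℝ, (if s.1 then 0 else s.2.2) ∂μ₂ := by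
    rw [← hψint μ₁, ← hψint μ₂, hmap]
  -- set p
  set p := μ₁ {s : Bool × ℝ × ℝ | s.1 = true} with hpdef
  have hpt : 0 < p.toReal := ENNReal.toReal_pos hz₁0.ne' (lt_of_lt_of_le hz₁1 le_top).ne
  -- μ {z=false} = 1 - p
  have hcompl : ∀ (μ : Measure (Bool × ℝ × ℝ)) [IsProbabilityMeasure μ],
      μ {s : Bool × ℝ × ℝ | s.1 = false} = 1 - μ {s : Bool × ℝ × ℝ | s.1 = true} := by
    intro μ _
    have : {s : Bool × ℝ × ℝ | s.1 = false} = {s : Bool × ℝ × ℝ | s.1 = true}ᶜ := by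
      ext s; cases s.1 <;> simp_all
    rw [this, measure_compl hsetT (by simp), measure_univ]
  have hqt : 0 < (1 - p).toReal := by
    refine ENNReal.toReal_pos ?_ (by simp)
    simpa [tsub_eq_zero_iff_le, hpdef, not_le] using hz₁1.not_ge ∘ fun h => h
  have hy1 : ∫ s : Bool × ℝ × ℝ, s.2.1 ∂μ₁ = ∫ s : Bool × ℝ × ℝ, s.2.1 ∂μ₂ := by
    have e1 := ate_key_true μ₁ hind₁ h₁₁
    have e2 := ate_key_true μ₂ hind₂ h₂₁
    rw [hA, e2, ← hp, ← hpdef] at e1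
    exact mul_left_cancel₀ hpt.ne' e1.symm
  have hy0 : ∫ s : Bool × ℝ × ℝ, s.2.2 ∂μ₁ = ∫ s : Bool × ℝ × ℝ, s.2.2 ∂μ₂ := by
    have e1 := ate_key_false μ₁ hind₁ h₁₀
    have e2 := ate_key_false μ₂ hind₂ h₂₀
    rw [hB, e2, hcompl μ₂, hcompl μ₁, ← hp, ← hpdef] at e1
    exact mul_left_cancel₀ hqt.ne' e1.symm
  rw [integral_sub h₁₁ h₁₀, integral_sub h₂₁ h₂₀, hy1, hy0]
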